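/- arXiv:1608.00774 — 4 statements merged into one kernel-verified Lean document; each statement's English description precedes it below -/
import Mathlib

section
/- Let G be a finite group and {x, y} any generating pair of G. Then the center Z(G) is contained in Σ(x,y), where Σ(x,y) is the union of all conjugates of all powers of x, y, and xy. Consequently, if Z(G) is non-trivial and every generating pair's Σ-set contains Z(G), a group like C_q ≀ C_r with non-trivial center cannot be a Beauville group. -/
open Subgroup

/-- Σ(g,h): the union of all conjugates of all (nontrivial-index) powers of g, h and gh. -/
def SigmaSet {G : Type*} [Group G] (g h : G) : Set G :=
  { z | ∃ i : ℕ, 1 ≤ i ∧ i ≤ Nat.card G ∧ ∃ k : G,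
      z = k⁻¹ * g ^ i * k ∨ z = k⁻¹ * h ^ i * k ∨ z = k⁻¹ * (g * h) ^ i * k }

/-- A Beauville group. -/
def IsBeauville (G : Type*) [Group G] : Prop :=
  ∃ x₁ y₁ x₂ y₂ : G, closure {x₁, y₁} = ⊤ ∧ closure {x₂, y₂} = ⊤ ∧
    SigmaSet x₁ y₁ ∩ SigmaSet x₂ y₂ = {1}

/-- A strongly real Beauville group. -/
def IsStronglyRealBeauville (G : Type*) [Group G] : Prop :=
  ∃ x₁ y₁ x₂ y₂ : G, closure {x₁, y₁} = ⊤ ∧ closure {x₂, y₂} = ⊤ ∧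
    SigmaSet x₁ y₁ ∩ SigmaSet x₂ y₂ = {1} ∧
    ∃ (φ : MulAut G) (g₁ g₂ : G),
      g₁ * φ x₁ * g₁⁻¹ = x₁⁻¹ ∧ g₁ * φ y₁ * g₁⁻¹ = y₁⁻¹ ∧
      g₂ * φ x₂ * g₂⁻¹ = x₂⁻¹ ∧ g₂ * φ y₂ * g₂⁻¹ = y₂⁻¹

/-- The shift automorphism of the base group of the wreath product. -/
def shiftAut (q r : ℕ) (c : ZMod r) :
    (ZMod r → Multiplicative (ZMod q)) ≃* (ZMod r → Multiplicative (ZMod q)) where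
  toFun f j := f (j - c)
  invFun f j := f (j + c)
  left_inv f := by funext j; simp
  right_inv f := by funext j; simp
  map_mul' f g := rfl

/-- The action of the top group C_r on the base group (C_q)^r by cyclic shift. -/
def wrAct (q r : ℕ) :
    Multiplicative (ZMod r) →* MulAut (ZMod r → Multiplicative (ZMod q)) where
  toFun c := shiftAut q r c.toAdd
  map_one' := by ext f j; simp [shiftAut]
  map_mul' a b := by ext f j; simp [shiftAut, sub_sub]

/-- The wreath product C_q ≀ C_r = (C_q)^r ⋊ C_r. -/
abbrev Wr (q r : ℕ) : Type :=
  (ZMod r → Multiplicative (ZMod q)) ⋊[wrAct q r] Multiplicative (ZMod r)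

/-- The standard base generator x of C_q ≀ C_r (generating one base coordinate). -/
def wx (q r : ℕ) : Wr q r :=
  SemidirectProduct.inl (Pi.mulSingle 0 (Multiplicative.ofAdd (1 : ZMod q)))

/-- The standard top generator y of C_q ≀ C_r (cyclically permuting the coordinates). -/
def wy (q r : ℕ) : Wr q r := SemidirectProduct.inr (Multiplicative.ofAdd (1 : ZMod r))

section Aux

variable {q r : ℕ}

theorem wrAct_apply (c : Multiplicative (ZMod r)) (f : ZMod r → Multiplicative (ZMod q))
    (j : ZMod r) : wrAct q r c f j = f (j - c.toAdd) := rfl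

/-- the "product of all coordinates" homomorphism -/
def sHom (q r : ℕ) [NeZero r] : Wr q r →* Multiplicative (ZMod q) :=
  MonoidHom.mk' (fun z => ∏ j, z.left j) (by
    intro u v
    show (∏ j, (u.left * wrAct q r u.right v.left) j) = _
    simp only [Pi.mul_apply]
    rw [Finset.prod_mul_distrib]
    congr 1
    show (∏ j, v.left (j - u.right.toAdd)) = ∏ j, v.left j
    exact Equiv.prod_comp (Equiv.subRight u.right.toAdd) v.left)

theorem sHom_apply [NeZero r] (u : Wr q r) : sHom q r u = ∏ j, u.left j := rfl

theorem wr_pow_eq [NeZero r] (u : Wr q r) (n : ℕ) :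
    u ^ n = ⟨fun j => ∏ i ∈ Finset.range n, u.left (j - (i : ZMod r) * u.right.toAdd),
      u.right ^ n⟩ := by
  induction n with
  | zero =>
      refine SemidirectProduct.ext (funext fun j => ?_) ?_ <;> simp
  | succ n ih =>
      rw [pow_succ, ih]
      refine SemidirectProduct.ext (funext fun j => ?_) ?_
      · show (∏ i ∈ Finset.range n, u.left (j - (i : ZMod r) * u.right.toAdd)) *
            u.left (j - (u.right ^ n).toAdd)
            = ∏ i ∈ Finset.range (n + 1), u.left (j - (i : ZMod r) * u.right.toAdd)
        rw [Finset.prod_range_succ, toAdd_pow, nsmul_eq_mul]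
      · exact (pow_succ u.right n).symm

theorem wr_pow_card [NeZero r] (u : Wr q r) (cu : (ZMod r)ˣ)
    (hcu : u.right.toAdd = (cu : ZMod r)) :
    u ^ r = SemidirectProduct.inl (fun _ => ∏ k, u.left k) := by
  rw [wr_pow_eq]
  refine SemidirectProduct.ext (funext fun j => ?_) ?_
  · show (∏ i ∈ Finset.range r, u.left (j - (i : ZMod r) * u.right.toAdd)) = ∏ k, u.left k
    rw [hcu]
    have stepA : ∏ i ∈ Finset.range r, u.left (j - (i : ZMod r) * (cu : ZMod r))
        = ∏ k : ZMod r, u.left (j - k * (cu : ZMod r)) := by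
      refine Finset.prod_bij (fun i _ => (i : ZMod r)) (fun i _ => Finset.mem_univ _)
        ?_ ?_ (fun i _ => rfl)
      · intro a₁ ha₁ a₂ ha₂ h
        have h2 := congrArg ZMod.val h
        rwa [ZMod.val_natCast_of_lt (Finset.mem_range.mp ha₁),
          ZMod.val_natCast_of_lt (Finset.mem_range.mp ha₂)] at h2
      · intro k _
        exact ⟨k.val, Finset.mem_range.mpr (ZMod.val_lt k), ZMod.natCast_zmod_val k⟩
    have hli : ∀ k : ZMod r,
        (j - (j - k * (cu : ZMod r))) * ((cu⁻¹ : (ZMod r)ˣ) : ZMod r) = k := fun k => by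
      rw [sub_sub_cancel, Units.mul_inv_cancel_right]
    have hri : ∀ x : ZMod r,
        j - ((j - x) * ((cu⁻¹ : (ZMod r)ˣ) : ZMod r)) * (cu : ZMod r) = x := fun x => by
      rw [Units.inv_mul_cancel_right, sub_sub_cancel]
    rw [stepA]
    exact Equiv.prod_comp
      ⟨fun k => j - k * (cu : ZMod r), fun x => (j - x) * ((cu⁻¹ : (ZMod r)ˣ) : ZMod r),
        hli, hri⟩ u.left
  · show u.right ^ r = 1
    have h1 : (u.right ^ r).toAdd = 0 := by
      rw [toAdd_pow, nsmul_eq_mul, ZMod.natCast_self, zero_mul]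
    calc u.right ^ r = Multiplicative.ofAdd (u.right ^ r).toAdd := (ofAdd_toAdd _).symm
      _ = 1 := by rw [h1, ofAdd_zero]

theorem wr_pow_mul [NeZero r] (u : Wr q r) (cu : (ZMod r)ˣ)
    (hcu : u.right.toAdd = (cu : ZMod r)) (m : ℕ) :
    u ^ (r * m) = SemidirectProduct.inl (fun _ => (∏ k, u.left k) ^ m) := by
  rw [pow_mul, wr_pow_card u cu hcu, ← map_pow]
  exact congrArg _ (funext fun _ => Pi.pow_apply _ _ _)

theorem center_struct [NeZero r] (hq1 : (1 : ZMod q) ≠ 0) (z : Wr q r)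
    (hz : z ∈ Subgroup.center (Wr q r)) :
    z = SemidirectProduct.inl (fun _ => z.left 0) := by
  rw [Subgroup.mem_center_iff] at hz
  have hr1 : z.right = 1 := by
    have h := congrFun (congrArg SemidirectProduct.left
      (hz (SemidirectProduct.inl (Pi.mulSingle 0 (Multiplicative.ofAdd (1 : ZMod q))))))
      z.right.toAdd
    simp only [SemidirectProduct.mul_left, SemidirectProduct.left_inl,
      SemidirectProduct.right_inl, Pi.mul_apply, wrAct_apply, toAdd_one, sub_zero,
      sub_self] at h
    have h5 : (Pi.mulSingle 0 (Multiplicative.ofAdd (1 : ZMod q)) :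
          ZMod r → Multiplicative (ZMod q)) z.right.toAdd
        = (Pi.mulSingle 0 (Multiplicative.ofAdd (1 : ZMod q)) :
          ZMod r → Multiplicative (ZMod q)) (z.right.toAdd - z.right.toAdd) := by
      rw [mul_comm (z.left z.right.toAdd)] at h
      rw [sub_self]; exact mul_right_cancel h
    rw [sub_self] at h5
    have he : z.right.toAdd = 0 := by
      by_contra hne
      rw [Pi.mulSingle_eq_of_ne hne, Pi.mulSingle_eq_same] at h5
      exact hq1 (by simpa using (congrArg Multiplicative.toAdd h5).symm)
    calc z.right = Multiplicative.ofAdd z.right.toAdd := (ofAdd_toAdd _).symm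
      _ = 1 := by rw [he, ofAdd_zero]
  have hconst : ∀ j, z.left j = z.left 0 := by
    have key : ∀ j : ZMod r, z.left (j - 1) = z.left j := by
      intro j
      have h := congrFun (congrArg SemidirectProduct.left
        (hz (SemidirectProduct.inr (Multiplicative.ofAdd (1 : ZMod r))))) j
      simpa only [SemidirectProduct.mul_left, SemidirectProduct.left_inr,
        SemidirectProduct.right_inr, Pi.mul_apply, wrAct_apply, toAdd_ofAdd, Pi.one_apply,
        one_mul, mul_one] using h
    have key2 : ∀ (n : ℕ) (j : ZMod r), z.left (j - (n : ZMod r)) = z.left j := by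
      intro n
      induction n with
      | zero => intro j; rw [Nat.cast_zero, sub_zero]
      | succ n ih =>
          intro j
          have h6 : j - ((n + 1 : ℕ) : ZMod r) = (j - (n : ZMod r)) - 1 := by
            push_cast; ring
          rw [h6, key, ih]
    intro j
    have h7 := key2 j.val j
    rw [ZMod.natCast_zmod_val, sub_self] at h7
    exact h7.symm
  refine SemidirectProduct.ext (funext fun j => ?_) ?_
  · simpa using hconst j
  · simpa using hr1

theorem const_center [NeZero r] (t : Multiplicative (ZMod q)) :
    (SemidirectProduct.inl (fun _ => t) : Wr q r) ∈ Subgroup.center (Wr q r) := by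
  rw [Subgroup.mem_center_iff]
  intro g
  refine SemidirectProduct.ext (funext fun j => ?_) ?_
  · simp only [SemidirectProduct.mul_left, SemidirectProduct.left_inl,
      SemidirectProduct.right_inl, Pi.mul_apply, wrAct_apply, toAdd_one, sub_zero]
    exact mul_comm _ _
  · simp only [SemidirectProduct.mul_right, SemidirectProduct.right_inl, one_mul, mul_one]

theorem card_wr [NeZero q] [NeZero r] : Nat.card (Wr q r) = q ^ r * r := by
  have e : Wr q r ≃ (ZMod r → Multiplicative (ZMod q)) × Multiplicative (ZMod r) :=
    ⟨fun z => (z.left, z.right), fun z => ⟨z.1, z.2⟩, fun _ => rfl, fun _ => rfl⟩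
  have hq : Nat.card (Multiplicative (ZMod q)) = q := by
    rw [Nat.card_congr Multiplicative.toAdd, Nat.card_zmod]
  have hr : Nat.card (Multiplicative (ZMod r)) = r := by
    rw [Nat.card_congr Multiplicative.toAdd, Nat.card_zmod]
  rw [Nat.card_congr e, Nat.card_prod, Nat.card_fun, hq, hr, Nat.card_zmod]

theorem not_one_eq_p_mul {p e : ℕ} (hp : p.Prime) (he : 1 ≤ e) (c : ZMod (p ^ e)) :
    (1 : ZMod (p ^ e)) ≠ (p : ZMod (p ^ e)) * c := by
  intro h
  have h2 : ((p ^ (e - 1) : ℕ) : ZMod (p ^ e)) = 0 := by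
    calc ((p ^ (e - 1) : ℕ) : ZMod (p ^ e))
        = ((p ^ (e - 1) : ℕ) : ZMod (p ^ e)) * 1 := (mul_one _).symm
      _ = ((p ^ (e - 1) : ℕ) : ZMod (p ^ e)) * ((p : ZMod (p ^ e)) * c) := by rw [← h]
      _ = (((p ^ (e - 1) * p : ℕ)) : ZMod (p ^ e)) * c := by push_cast; ring
      _ = ((p ^ e : ℕ) : ZMod (p ^ e)) * c := by rw [← pow_succ, Nat.sub_add_cancel he]
      _ = 0 := by rw [ZMod.natCast_self, zero_mul]
  rw [ZMod.natCast_eq_zero_iff] at h2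
  have h4 := Nat.le_of_dvd (pow_pos hp.pos _) h2
  have h5 : p ^ (e - 1) < p ^ e := Nat.pow_lt_pow_right hp.one_lt (by omega)
  omega

theorem isUnit_of_not_p_mul {p e : ℕ} (hp : p.Prime) (he : 1 ≤ e) (s : ZMod (p ^ e))
    (h : ¬ ∃ c, s = (p : ZMod (p ^ e)) * c) : IsUnit s := by
  haveI : NeZero (p ^ e) := ⟨pow_ne_zero e hp.pos.ne'⟩
  by_cases hd : p ∣ s.val
  · obtain ⟨k, hk⟩ := hd
    exact absurd ⟨(k : ZMod (p ^ e)), by rw [← ZMod.natCast_zmod_val s, hk, Nat.cast_mul]⟩ h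
  · rw [← ZMod.natCast_zmod_val s, ZMod.isUnit_iff_coprime]
    exact Nat.Coprime.pow_right e (((Nat.Prime.coprime_iff_not_dvd hp).mpr hd).symm)

end Aux

/-- for the wreath product C_q ≀ C_r (q, r powers of a prime p, both > 1),
the Σ-set of every generating pair contains the (non-trivial) center; consequently
C_q ≀ C_r is not a Beauville group. -/
theorem stmt1 (p a b : ℕ) (hp : p.Prime) (q r : ℕ) (hq : q = p ^ a) (hr : r = p ^ b)
    (ha : 1 ≤ a) (hb : 1 ≤ b) :
    (∀ x y : Wr q r, closure {x, y} = ⊤ →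
      (Subgroup.center (Wr q r) : Set (Wr q r)) ⊆ SigmaSet x y) ∧
    ¬ IsBeauville (Wr q r) := by
  subst hq; subst hr
  haveI hnq : NeZero (p ^ a) := ⟨pow_ne_zero a hp.pos.ne'⟩
  haveI hnr : NeZero (p ^ b) := ⟨pow_ne_zero b hp.pos.ne'⟩
  have hq1 : 1 < p ^ a := Nat.one_lt_pow (by omega) hp.one_lt
  have hr1 : 1 < p ^ b := Nat.one_lt_pow (by omega) hp.one_lt
  have hone : (1 : ZMod (p ^ a)) ≠ 0 := by
    intro h
    have h2 : ((1 : ℕ) : ZMod (p ^ a)) = 0 := by exact_mod_cast h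
    rw [ZMod.natCast_eq_zero_iff] at h2
    have := Nat.le_of_dvd one_pos h2
    omega
  have main : ∀ x y : Wr (p ^ a) (p ^ b), closure {x, y} = ⊤ →
      (Subgroup.center (Wr (p ^ a) (p ^ b)) : Set (Wr (p ^ a) (p ^ b))) ⊆ SigmaSet x y := by
    intro x y hxy z hz
    set σ := sHom (p ^ a) (p ^ b) with hσdef
    set τ := (SemidirectProduct.rightHom :
      Wr (p ^ a) (p ^ b) →* Multiplicative (ZMod (p ^ b))) with hτdef
    set Pq := (powMonoidHom p : Multiplicative (ZMod (p ^ a)) →*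
      Multiplicative (ZMod (p ^ a))).range with hPqdef
    set Pr := (powMonoidHom p : Multiplicative (ZMod (p ^ b)) →*
      Multiplicative (ZMod (p ^ b))).range with hPrdef
    have hall : ∀ (H : Subgroup (Wr (p ^ a) (p ^ b))), x ∈ H → y ∈ H → ∀ w, w ∈ H := by
      intro H h1 h2 w
      have hle : closure {x, y} ≤ H := by
        apply (closure_le H).mpr
        intro g hg
        simp only [Set.mem_insert_iff, Set.mem_singleton_iff] at hg
        rcases hg with rfl | rfl
        · exact h1
        · exact h2
      rw [hxy] at hle
      exact hle (mem_top w)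
    have clA : ¬ (σ x ∈ Pq ∧ σ y ∈ Pq) := by
      rintro ⟨h1, h2⟩
      have h3 := hall (Pq.comap σ) h1 h2
        (SemidirectProduct.inl (Pi.mulSingle 0 (Multiplicative.ofAdd (1 : ZMod (p ^ a)))))
      rw [Subgroup.mem_comap] at h3
      obtain ⟨c, hc⟩ := h3
      have hσs : σ (SemidirectProduct.inl
          (Pi.mulSingle 0 (Multiplicative.ofAdd (1 : ZMod (p ^ a)))))
          = Multiplicative.ofAdd (1 : ZMod (p ^ a)) := by
        show (∏ j, (Pi.mulSingle 0 (Multiplicative.ofAdd (1 : ZMod (p ^ a))) :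
            ZMod (p ^ b) → Multiplicative (ZMod (p ^ a))) j) = _
        exact Fintype.prod_pi_mulSingle' 0 _
      rw [hσs] at hc
      have hc' : c ^ p = Multiplicative.ofAdd (1 : ZMod (p ^ a)) := hc
      have h4 := congrArg Multiplicative.toAdd hc'
      rw [toAdd_pow, nsmul_eq_mul, toAdd_ofAdd] at h4
      exact not_one_eq_p_mul hp ha c.toAdd h4.symm
    have clB : ¬ (τ x ∈ Pr ∧ τ y ∈ Pr) := by
      rintro ⟨h1, h2⟩
      have h3 := hall (Pr.comap τ) h1 h2
        (SemidirectProduct.inr (Multiplicative.ofAdd (1 : ZMod (p ^ b))))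
      rw [Subgroup.mem_comap] at h3
      obtain ⟨c, hc⟩ := h3
      have hτs : τ (SemidirectProduct.inr (Multiplicative.ofAdd (1 : ZMod (p ^ b))))
          = Multiplicative.ofAdd (1 : ZMod (p ^ b)) := SemidirectProduct.rightHom_inr _
      rw [hτs] at hc
      have hc' : c ^ p = Multiplicative.ofAdd (1 : ZMod (p ^ b)) := hc
      have h4 := congrArg Multiplicative.toAdd hc'
      rw [toAdd_pow, nsmul_eq_mul, toAdd_ofAdd] at h4
      exact not_one_eq_p_mul hp hb c.toAdd h4.symm
    obtain ⟨u, hu, hσu, hτu⟩ : ∃ u, (u = x ∨ u = y ∨ u = x * y) ∧ σ u ∉ Pq ∧ τ u ∉ Pr := by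
      by_cases hx1 : σ x ∈ Pq
      · have hy1 : σ y ∉ Pq := fun h => clA ⟨hx1, h⟩
        by_cases hy2 : τ y ∈ Pr
        · have hx2 : τ x ∉ Pr := fun h' => clB ⟨h', hy2⟩
          refine ⟨x * y, Or.inr (Or.inr rfl), ?_, ?_⟩
          · intro h
            apply hy1
            have hyy : σ y = (σ x)⁻¹ * σ (x * y) := by rw [map_mul, inv_mul_cancel_left]
            rw [hyy]
            exact Pq.mul_mem (Pq.inv_mem hx1) h
          · intro h
            apply hx2
            have hxx : τ x = τ (x * y) * (τ y)⁻¹ := by rw [map_mul, mul_inv_cancel_right]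
            rw [hxx]
            exact Pr.mul_mem h (Pr.inv_mem hy2)
        · exact ⟨y, Or.inr (Or.inl rfl), hy1, hy2⟩
      · by_cases hx2 : τ x ∈ Pr
        · have hy2 : τ y ∉ Pr := fun h => clB ⟨hx2, h⟩
          by_cases hy1 : σ y ∈ Pq
          · refine ⟨x * y, Or.inr (Or.inr rfl), ?_, ?_⟩
            · intro h
              apply hx1
              have hxx : σ x = σ (x * y) * (σ y)⁻¹ := by rw [map_mul, mul_inv_cancel_right]
              rw [hxx]
              exact Pq.mul_mem h (Pq.inv_mem hy1)
            · intro h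
              apply hy2
              have hyy : τ y = (τ x)⁻¹ * τ (x * y) := by rw [map_mul, inv_mul_cancel_left]
              rw [hyy]
              exact Pr.mul_mem (Pr.inv_mem hx2) h
          · exact ⟨y, Or.inr (Or.inl rfl), hy1, hy2⟩
        · exact ⟨x, Or.inl rfl, hx1, hx2⟩
    have hs : IsUnit (σ u).toAdd := by
      apply isUnit_of_not_p_mul hp ha
      rintro ⟨c, hc⟩
      apply hσu
      refine ⟨Multiplicative.ofAdd c, ?_⟩
      show Multiplicative.ofAdd c ^ p = σ u
      apply Multiplicative.toAdd.injective
      rw [toAdd_pow, toAdd_ofAdd, nsmul_eq_mul]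
      exact hc.symm
    have hcu : IsUnit (τ u).toAdd := by
      apply isUnit_of_not_p_mul hp hb
      rintro ⟨c, hc⟩
      apply hτu
      refine ⟨Multiplicative.ofAdd c, ?_⟩
      show Multiplicative.ofAdd c ^ p = τ u
      apply Multiplicative.toAdd.injective
      rw [toAdd_pow, toAdd_ofAdd, nsmul_eq_mul]
      exact hc.symm
    obtain ⟨su, hsu⟩ := hs
    obtain ⟨cu, hcu'⟩ := hcu
    have hzc := center_struct hone z hz
    set t := z.left 0 with htdef
    set m₀ := (t.toAdd * ((su⁻¹ : (ZMod (p ^ a))ˣ) : ZMod (p ^ a))).val with hm₀def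
    set m := if m₀ = 0 then p ^ a else m₀ with hmdef
    have hm1 : 1 ≤ m := by
      rw [hmdef]; split
      · omega
      · omega
    have hm2 : m ≤ p ^ a := by
      have := ZMod.val_lt (t.toAdd * ((su⁻¹ : (ZMod (p ^ a))ˣ) : ZMod (p ^ a)))
      rw [hmdef]; split <;> omega
    have hmcast : ((m : ℕ) : ZMod (p ^ a))
        = t.toAdd * ((su⁻¹ : (ZMod (p ^ a))ˣ) : ZMod (p ^ a)) := by
      have h0 : ((m₀ : ℕ) : ZMod (p ^ a))
          = t.toAdd * ((su⁻¹ : (ZMod (p ^ a))ˣ) : ZMod (p ^ a)) :=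
        ZMod.natCast_zmod_val _
      rw [hmdef]; split
      · next h => rw [ZMod.natCast_self, ← h0, h, Nat.cast_zero]
      · exact h0
    have hpow : (σ u) ^ m = t := by
      apply Multiplicative.toAdd.injective
      rw [toAdd_pow, nsmul_eq_mul, hmcast, ← hsu, mul_assoc, Units.inv_mul, mul_one]
    have hup : u ^ (p ^ b * m) = SemidirectProduct.inl (fun _ => t) := by
      have h8 := wr_pow_mul u cu hcu'.symm m
      rw [h8]
      have h9 : (∏ k, u.left k) = σ u := rfl
      simp only [h9, hpow]
    refine ⟨p ^ b * m, ?_, ?_, 1, ?_⟩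
    · exact Nat.mul_pos (pow_pos hp.pos b) hm1
    · rw [card_wr]
      calc p ^ b * m ≤ p ^ b * p ^ a := Nat.mul_le_mul_left _ hm2
        _ ≤ p ^ b * (p ^ a) ^ (p ^ b) :=
          Nat.mul_le_mul_left _ (Nat.le_self_pow (by positivity) _)
        _ = (p ^ a) ^ (p ^ b) * p ^ b := Nat.mul_comm _ _
    · have hz2 : z = u ^ (p ^ b * m) := by rw [hup]; exact hzc
      rcases hu with rfl | rfl | rfl
      · left; rw [inv_one, one_mul, mul_one]; exact hz2
      · right; left; rw [inv_one, one_mul, mul_one]; exact hz2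
      · right; right; rw [inv_one, one_mul, mul_one]; exact hz2
  refine ⟨main, ?_⟩
  rintro ⟨x₁, y₁, x₂, y₂, h1, h2, h3⟩
  have hz0 : (SemidirectProduct.inl (fun _ : ZMod (p ^ b) => Multiplicative.ofAdd (1 : ZMod (p ^ a)))
      : Wr (p ^ a) (p ^ b)) ∈ Subgroup.center (Wr (p ^ a) (p ^ b)) := const_center _
  have m1 := main x₁ y₁ h1 hz0
  have m2 := main x₂ y₂ h2 hz0
  have hmem : (SemidirectProduct.inl (fun _ : ZMod (p ^ b) => Multiplicative.ofAdd (1 : ZMod (p ^ a)))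
      : Wr (p ^ a) (p ^ b)) ∈ SigmaSet x₁ y₁ ∩ SigmaSet x₂ y₂ := ⟨m1, m2⟩
  rw [h3, Set.mem_singleton_iff] at hmem
  have h10 := congrFun (congrArg SemidirectProduct.left hmem) 0
  simp only [SemidirectProduct.left_inl, SemidirectProduct.one_left, Pi.one_apply] at h10
  have h11 := congrArg Multiplicative.toAdd h10
  rw [toAdd_ofAdd, toAdd_one] at h11
  exact hone h11
end

section
/- Let n > 1 be a natural number coprime to 6. Then the abelian group C_n × C_n is a Beauville group. -/
open Subgroup

lemma mem_sigmaSet_iff' {G : Type*} [CommGroup G] (g h z : G) :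
    z ∈ SigmaSet g h ↔ ∃ i : ℕ, 1 ≤ i ∧ i ≤ Nat.card G ∧
      (z = g ^ i ∨ z = h ^ i ∨ z = (g*h) ^ i) := by
  have key : ∀ a k : G, k⁻¹ * a * k = a := fun a k => by
    rw [mul_comm, ← mul_assoc, mul_inv_cancel, one_mul]
  constructor
  · rintro ⟨i, h1, h2, k, hk⟩
    exact ⟨i, h1, h2, by simpa [key] using hk⟩
  · rintro ⟨i, h1, h2, hk⟩
    exact ⟨i, h1, h2, 1, by simpa [key] using hk⟩

section main
variable (n : ℕ)

def ee (a b : ZMod n) : Multiplicative (ZMod n) × Multiplicative (ZMod n) :=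
  (Multiplicative.ofAdd a, Multiplicative.ofAdd b)

lemma ee_mul (a b c d : ZMod n) : ee n a b * ee n c d = ee n (a+c) (b+d) := rfl

lemma ee_inv (a b : ZMod n) : (ee n a b)⁻¹ = ee n (-a) (-b) := rfl

lemma ee_pow (a b : ZMod n) (i : ℕ) :
    (ee n a b) ^ i = ee n ((i : ZMod n) * a) ((i : ZMod n) * b) := by
  ext <;> simp [ee, ← ofAdd_nsmul, nsmul_eq_mul]

lemma ee_inj {a b c d : ZMod n} : ee n a b = ee n c d ↔ a = c ∧ b = d := by
  simp [ee, Prod.ext_iff]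

lemma ee_one : ee n 0 0 = 1 := rfl

lemma ee_toAdd (z : Multiplicative (ZMod n) × Multiplicative (ZMod n)) :
    z = ee n z.1.toAdd z.2.toAdd := rfl

lemma gen1 (hn : 1 < n) : Subgroup.closure {ee n 1 0, ee n 0 1} = ⊤ := by
  haveI : NeZero n := ⟨by omega⟩
  rw [eq_top_iff]
  rintro z -
  have hx : ee n 1 0 ∈ Subgroup.closure {ee n 1 0, ee n 0 1} := subset_closure (by simp)
  have hy : ee n 0 1 ∈ Subgroup.closure {ee n 1 0, ee n 0 1} := subset_closure (by simp)
  have : z = (ee n 1 0) ^ (z.1.toAdd.val) * (ee n 0 1) ^ (z.2.toAdd.val) := by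
    rw [ee_pow, ee_pow, ee_mul]
    nth_rewrite 1 [ee_toAdd n z]
    simp [ZMod.natCast_val]
  rw [this]
  exact mul_mem (pow_mem hx _) (pow_mem hy _)

lemma gen2 (hn : 1 < n) (hcop : Nat.Coprime n 6) :
    Subgroup.closure {ee n 1 2, ee n 1 (-1)} = ⊤ := by
  haveI : NeZero n := ⟨by omega⟩
  have h3 : IsUnit (3 : ZMod n) := by
    have : Nat.Coprime 3 n := (Nat.Coprime.coprime_dvd_right (by norm_num) hcop).symm
    simpa using (ZMod.isUnit_iff_coprime 3 n).mpr this
  set c : ZMod n := (3 : ZMod n)⁻¹ with hc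
  have h3c : (3 : ZMod n) * c = 1 := ZMod.mul_inv_of_unit _ h3
  set H := Subgroup.closure {ee n 1 2, ee n 1 (-1)} with hH
  have hx : ee n 1 2 ∈ H := subset_closure (by simp)
  have hy : ee n 1 (-1) ∈ H := subset_closure (by simp)
  have he1 : ee n 1 0 ∈ H := by
    have : ee n 1 0 = (ee n 1 2) ^ c.val * (ee n 1 (-1)) ^ (2 * c.val) := by
      rw [ee_pow, ee_pow, ee_mul, ee_inj]
      push_cast
      rw [ZMod.natCast_val, ZMod.cast_id]
      constructor
      · linear_combination -h3c
      · ring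
    rw [this]; exact mul_mem (pow_mem hx _) (pow_mem hy _)
  have he2 : ee n 0 1 ∈ H := by
    have : ee n 0 1 = (ee n 1 2) ^ c.val * ((ee n 1 (-1)) ^ c.val)⁻¹ := by
      rw [ee_pow, ee_pow, ee_inv, ee_mul, ee_inj]
      rw [ZMod.natCast_val, ZMod.cast_id]
      constructor
      · ring
      · linear_combination -h3c
    rw [this]; exact mul_mem (pow_mem hx _) (inv_mem (pow_mem hy _))
  rw [eq_top_iff, ← gen1 n hn]
  exact (closure_le _).mpr (by rintro z (rfl | rfl) <;> simpa)

end main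

lemma one_mem_sigma {G : Type*} [Group G] [Finite G] (g h : G) : (1:G) ∈ SigmaSet g h := by
  refine ⟨Nat.card G, Nat.card_pos, le_refl _, 1, Or.inl ?_⟩
  simp [pow_card_eq_one']

lemma inter12 (n : ℕ) (hn : 1 < n) (hcop : Nat.Coprime n 6) :
    SigmaSet (ee n 1 0) (ee n 0 1) ∩ SigmaSet (ee n 1 2) (ee n 1 (-1)) = {1} := by
  haveI : NeZero n := ⟨by omega⟩
  have h2 : IsUnit (2 : ZMod n) := by
    have : Nat.Coprime 2 n := (Nat.Coprime.coprime_dvd_right (by norm_num) hcop).symm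
    simpa using (ZMod.isUnit_iff_coprime 2 n).mpr this
  have h2c : ∀ x : ZMod n, 2 * x = 0 → x = 0 := fun x hx => by
    obtain ⟨u, hu⟩ := h2
    calc x = (u⁻¹ : (ZMod n)ˣ) * (2 * x) := by rw [← hu, ← mul_assoc, Units.inv_mul, one_mul]
    _ = 0 := by rw [hx, mul_zero]
  apply Set.eq_singleton_iff_unique_mem.mpr
  refine ⟨⟨one_mem_sigma _ _, one_mem_sigma _ _⟩, ?_⟩
  rintro z ⟨hz1, hz2⟩
  rw [mem_sigmaSet_iff'] at hz1 hz2
  obtain ⟨i, -, -, hi⟩ := hz1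
  obtain ⟨j, -, -, hj⟩ := hz2
  rw [ee_mul] at hi hj
  simp only [ee_pow, mul_one, mul_zero] at hi hj
  norm_num at hi hj
  set a := (i : ZMod n) with ha'
  set b := (j : ZMod n) with hb'
  rcases hi with rfl | rfl | rfl <;> rcases hj with h | h | h <;> rw [ee_inj] at h <;>
      obtain ⟨h1, h2'⟩ := h <;>
    [skip; skip; skip; skip; skip; skip; skip; skip; skip] <;>
  · have hb : b = 0 := by
      first
      | linear_combination h1 | linear_combination -h1
      | linear_combination h2' | linear_combination -h2'
      | linear_combination h1 - h2' | linear_combination h2' - h1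
      | exact h2c b (by
          first
          | linear_combination h1 | linear_combination -h1
          | linear_combination h2' | linear_combination -h2'
          | linear_combination h1 - h2' | linear_combination h2' - h1)
    rw [hb] at h1 h2'
    have ha : a = 0 := by first | simpa using h1 | simpa using h2'
    rw [ha]; exact ee_one n


/-- Catanese: for n > 1 coprime to 6, the abelian group C_n × C_n is a
Beauville group. -/
theorem stmt2 (n : ℕ) (hn : 1 < n) (hcop : Nat.Coprime n 6) :
    IsBeauville (Multiplicative (ZMod n) × Multiplicative (ZMod n)) := by
  exact ⟨ee n 1 0, ee n 0 1, ee n 1 2, ee n 1 (-1), gen1 n hn, gen2 n hn hcop,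
    inter12 n hn hcop⟩
end

section
/- Let p ≥ 5 be a prime. Then for every k ≥ 1 the group C_{p^k} × C_{p^k} is a Beauville group; in particular there exist infinitely many pairwise non-isomorphic abelian Beauville p-groups. -/
open Subgroup

section aux
variable {n : ℕ}

/-- The element of `C_n × C_n` with additive coordinates `(a, b)`. -/
def vv (a b : ZMod n) : Multiplicative (ZMod n) × Multiplicative (ZMod n) :=
  (Multiplicative.ofAdd a, Multiplicative.ofAdd b)

lemma vv_pow (a b : ZMod n) (m : ℕ) :
    (vv a b) ^ m = vv ((m : ZMod n) * a) ((m : ZMod n) * b) := by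
  simp [vv, Prod.pow_mk, ← ofAdd_nsmul, nsmul_eq_mul]

lemma vv_mul (a b c d : ZMod n) : vv a b * vv c d = vv (a + c) (b + d) := by
  simp [vv, Prod.mk_mul_mk, ← ofAdd_add]

lemma vv_inj {a b c d : ZMod n} (h : vv a b = vv c d) : a = c ∧ b = d := by
  simpa [vv, Prod.ext_iff] using h

lemma conj_comm' {G : Type*} [CommGroup G] (k a : G) : k⁻¹ * a * k = a := by
  rw [mul_comm, ← mul_assoc, mul_inv_cancel, one_mul]

lemma zkey (I J A B C D : ZMod n) (hdet : IsUnit (A * D - B * C))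
    (h1 : I * A = J * C) (h2 : I * B = J * D) : I = 0 := by
  have h0 : I * (A * D - B * C) = 0 := by linear_combination D * h1 - C * h2
  obtain ⟨u, hu⟩ := hdet
  calc I = I * (A * D - B * C) * (u⁻¹ : (ZMod n)ˣ) := by
        rw [← hu]; simp [mul_assoc]
    _ = 0 := by rw [h0, zero_mul]

lemma main_case (A B C D : ZMod n) (hdet : IsUnit (A * D - B * C)) (i j : ℕ)
    (z : Multiplicative (ZMod n) × Multiplicative (ZMod n))
    (h1 : z = (vv A B) ^ i) (h2 : z = (vv C D) ^ j) : z = 1 := by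
  rw [vv_pow] at h1 h2
  obtain ⟨e1, e2⟩ := vv_inj (h1.symm.trans h2)
  have hI : (i : ZMod n) = 0 := zkey _ _ A B C D hdet e1 e2
  rw [h1, hI, zero_mul, zero_mul]
  simp [vv, Prod.ext_iff]

lemma gen_mem {G : Type*} [Group G] {g1 g2 w : G} (m m' : ℕ)
    (h : w = g1 ^ m * g2 ^ m') : w ∈ Subgroup.closure {g1, g2} := by
  subst h
  exact mul_mem (pow_mem (subset_closure (by simp)) m)
    (pow_mem (subset_closure (by simp)) m')

end aux

/-- for every prime p ≥ 5 and every k ≥ 1 the group C_{p^k} × C_{p^k} is a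
Beauville group, and these groups are pairwise non-isomorphic, so there are infinitely
many pairwise non-isomorphic abelian Beauville p-groups. -/
theorem stmt4 (p : ℕ) (hp : p.Prime) (hp5 : 5 ≤ p) :
    (∀ k : ℕ, 1 ≤ k →
      IsBeauville (Multiplicative (ZMod (p ^ k)) × Multiplicative (ZMod (p ^ k)))) ∧
    ∀ k l : ℕ, k ≠ l →
      IsEmpty ((Multiplicative (ZMod (p ^ k)) × Multiplicative (ZMod (p ^ k))) ≃*
        (Multiplicative (ZMod (p ^ l)) × Multiplicative (ZMod (p ^ l)))) := by
  constructor
  · intro k hk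
    haveI : NeZero (p ^ k) := ⟨pow_ne_zero k hp.pos.ne'⟩
    set n := p ^ k with hn
    have hu1 : IsUnit (1 : ZMod n) := isUnit_one
    have hu2 : IsUnit (2 : ZMod n) := by
      have : IsUnit ((2 : ℕ) : ZMod n) := (ZMod.isUnit_iff_coprime 2 n).mpr
        (((Nat.coprime_primes Nat.prime_two hp).mpr (by omega)).pow_right k)
      simpa using this
    have hu3 : IsUnit (3 : ZMod n) := by
      have : IsUnit ((3 : ℕ) : ZMod n) := (ZMod.isUnit_iff_coprime 3 n).mpr
        (((Nat.coprime_primes Nat.prime_three hp).mpr (by omega)).pow_right k)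
      simpa using this
    refine ⟨vv 1 0, vv 0 1, vv 1 2, vv 1 (-1), ?_, ?_, ?_⟩
    · rw [eq_top_iff']
      intro g
      refine gen_mem g.1.toAdd.val g.2.toAdd.val ?_
      rw [vv_pow, vv_pow, vv_mul]
      simp [vv, Prod.ext_iff, ZMod.natCast_zmod_val]
    · rw [eq_top_iff']
      intro g
      set a := g.1.toAdd
      set b := g.2.toAdd
      set i : ZMod n := (a + b) * (3 : ZMod n)⁻¹ with hi
      set j : ZMod n := a - i with hj
      refine gen_mem i.val j.val ?_
      rw [vv_pow, vv_pow, vv_mul]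
      have h3 : (3 : ZMod n)⁻¹ * 3 = 1 := ZMod.inv_mul_of_unit 3 hu3
      have e1 : i * 1 + j * 1 = a := by rw [hj]; ring
      have e2 : i * 2 + j * (-1) = b := by
        rw [hj]; have : i * 3 = a + b := by rw [hi]; linear_combination (a+b) * h3
        linear_combination this
      simp only [ZMod.natCast_zmod_val, e1, e2]
      simp only [vv, Prod.ext_iff]
      exact ⟨rfl, rfl⟩
    · have hxy1 : vv (1 : ZMod n) 0 * vv 0 1 = vv 1 1 := by rw [vv_mul]; norm_num
      have hxy2 : vv (1 : ZMod n) 2 * vv 1 (-1) = vv 2 1 := by rw [vv_mul]; norm_num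
      ext z
      simp only [Set.mem_inter_iff, Set.mem_singleton_iff]
      constructor
      · rintro ⟨⟨i, -, -, kk, h⟩, ⟨j, -, -, kk', h'⟩⟩
        rw [conj_comm', conj_comm', conj_comm', hxy1] at h
        rw [conj_comm', conj_comm', conj_comm', hxy2] at h'
        rcases h with h | h | h <;> rcases h' with h' | h' | h'
        · exact main_case 1 0 1 2 (by rw [show (1:ZMod n)*2 - 0*1 = 2 by ring]; exact hu2) i j z h h'
        · exact main_case 1 0 1 (-1) (by rw [show (1:ZMod n)*(-1) - 0*1 = -1 by ring]; exact hu1.neg) i j z h h'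
        · exact main_case 1 0 2 1 (by rw [show (1:ZMod n)*1 - 0*2 = 1 by ring]; exact hu1) i j z h h'
        · exact main_case 0 1 1 2 (by rw [show (0:ZMod n)*2 - 1*1 = -1 by ring]; exact hu1.neg) i j z h h'
        · exact main_case 0 1 1 (-1) (by rw [show (0:ZMod n)*(-1) - 1*1 = -1 by ring]; exact hu1.neg) i j z h h'
        · exact main_case 0 1 2 1 (by rw [show (0:ZMod n)*1 - 1*2 = -2 by ring]; exact hu2.neg) i j z h h'
        · exact main_case 1 1 1 2 (by rw [show (1:ZMod n)*2 - 1*1 = 1 by ring]; exact hu1) i j z h h'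
        · exact main_case 1 1 1 (-1) (by rw [show (1:ZMod n)*(-1) - 1*1 = -2 by ring]; exact hu2.neg) i j z h h'
        · exact main_case 1 1 2 1 (by rw [show (1:ZMod n)*1 - 1*2 = -1 by ring]; exact hu1.neg) i j z h h'
      · rintro rfl
        constructor <;>
          exact ⟨Nat.card (Multiplicative (ZMod n) × Multiplicative (ZMod n)),
            Nat.card_pos, le_rfl, 1, Or.inl (by rw [pow_card_eq_one']; simp)⟩
  · intro k l hkl
    refine ⟨fun e => hkl ?_⟩
    haveI : NeZero (p ^ k) := ⟨pow_ne_zero k hp.pos.ne'⟩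
    haveI : NeZero (p ^ l) := ⟨pow_ne_zero l hp.pos.ne'⟩
    have hc := Nat.card_congr e.toEquiv
    have hk' : Nat.card (Multiplicative (ZMod (p ^ k)) × Multiplicative (ZMod (p ^ k)))
        = p ^ (k + k) := by
      rw [Nat.card_prod, Nat.card_congr Multiplicative.toAdd, Nat.card_zmod, pow_add]
    have hl' : Nat.card (Multiplicative (ZMod (p ^ l)) × Multiplicative (ZMod (p ^ l)))
        = p ^ (l + l) := by
      rw [Nat.card_prod, Nat.card_congr Multiplicative.toAdd, Nat.card_zmod, pow_add]
    rw [hk', hl'] at hc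
    have := Nat.pow_right_injective hp.two_le hc
    omega
end

section
/- Let A be a finite abelian group written multiplicatively, let y act on a family of commuting elements x^{yⁱ} indexed by i ∈ Z/rZ inside a group G with abelian normal subgroup containing all x^{yⁱ}, and suppose 3 is coprime to r and to the order of x. If a subgroup H of G contains x·x^{-y³ᵏ} for some k and is closed under conjugation by an element inducing i ↦ i+3 on the indices, then H contains x·x^{-yⁱ} for all i ∈ 3·Z/rZ = Z/rZ; together with x^y·x·x^{y⁻¹} ∈ H this yields x³ ∈ H and hence x ∈ H. -/
open Subgroup

private def cX {G : Type*} [Group G] (x y : G) (i : ℤ) : G := (y ^ i)⁻¹ * x * y ^ i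

private lemma cX_congr {G : Type*} [Group G] (x y : G) {r : ℕ} (hr : orderOf y = r)
    {i j : ℤ} (h : (i : ZMod r) = (j : ZMod r)) : cX x y i = cX x y j := by
  have hy : y ^ i = y ^ j := by
    rw [zpow_eq_zpow_iff_modEq, hr]
    exact (ZMod.intCast_eq_intCast_iff i j r).mp h
  simp only [cX]; rw [hy]

/-- the iterative conjugation step in the generation argument. Suppose the
conjugates x^{yⁱ} pairwise commute, y has order r with gcd(3, r) = 1, gcd(3, orderOf x) = 1,
the subgroup H contains x·x^{-y^{3k}} for some k ≥ 1, H is closed under conjugation by an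
element c inducing i ↦ i + 3 on the conjugates x^{yⁱ}, and x^y·x·x^{y⁻¹} ∈ H. Then H
contains x·x^{-yⁱ} for every i, hence x³ ∈ H and finally x ∈ H. -/
theorem stmt17 {G : Type*} [Group G] [Finite G] (x y : G) (r : ℕ) (H : Subgroup G)
    (hcomm : ∀ i j : ℤ, Commute ((y ^ i)⁻¹ * x * y ^ i) ((y ^ j)⁻¹ * x * y ^ j))
    (hr : orderOf y = r) (h3r : Nat.Coprime 3 r) (h3q : Nat.Coprime 3 (orderOf x))
    (k : ℕ) (hk : 1 ≤ k)
    (hstart : x * ((y ^ (3 * k : ℕ))⁻¹ * x * y ^ (3 * k : ℕ))⁻¹ ∈ H)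
    (c : G)
    (hc : ∀ i : ℤ, c⁻¹ * ((y ^ i)⁻¹ * x * y ^ i) * c = (y ^ (i + 3))⁻¹ * x * y ^ (i + 3))
    (hcH : ∀ h ∈ H, c⁻¹ * h * c ∈ H)
    (hb : (y⁻¹ * x * y) * x * (y * x * y⁻¹) ∈ H) :
    (∀ i : ℤ, x * ((y ^ i)⁻¹ * x * y ^ i)⁻¹ ∈ H) ∧ x ^ 3 ∈ H ∧ x ∈ H := by
  haveI : NeZero r := ⟨by rw [← hr]; exact (orderOf_pos y).ne'⟩
  have hx0 : cX x y 0 = x := by simp [cX]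
  have hcomm' : ∀ i j : ℤ, Commute (cX x y i) (cX x y j) := hcomm
  have hc' : ∀ i : ℤ, c⁻¹ * cX x y i * c = cX x y (i + 3) := hc
  have hcm : ∀ m : ℕ, ∀ i : ℤ, (c ^ m)⁻¹ * cX x y i * c ^ m = cX x y (i + 3 * m) := by
    intro m
    induction m with
    | zero => intro i; simp
    | succ n ih =>
      intro i
      have e : (c ^ (n+1))⁻¹ * cX x y i * c ^ (n+1)
          = c⁻¹ * ((c ^ n)⁻¹ * cX x y i * c ^ n) * c := by
        rw [pow_succ]; group
      rw [e, ih, hc']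
      congr 1
      push_cast; ring
  have hHm : ∀ m : ℕ, ∀ h ∈ H, (c ^ m)⁻¹ * h * c ^ m ∈ H := by
    intro m
    induction m with
    | zero => intro h hh; simpa using hh
    | succ n ih =>
      intro h hh
      have e : (c ^ (n+1))⁻¹ * h * c ^ (n+1) = c⁻¹ * ((c ^ n)⁻¹ * h * c ^ n) * c := by
        rw [pow_succ]; group
      rw [e]; exact hcH _ (ih h hh)
  set u : (ZMod r)ˣ := ZMod.unitOfCoprime 3 h3r
  have hu3 : (u : ZMod r) = 3 := by simp [u]
  have hsur : ∀ z : ZMod r, ∃ m : ℕ, ((3 * m : ℤ) : ZMod r) = z := by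
    intro z
    refine ⟨(z * (↑u⁻¹ : ZMod r)).val, ?_⟩
    push_cast
    rw [ZMod.natCast_val, ZMod.cast_id, ← hu3,
      mul_comm ((u : ZMod r)) (z * (↑u⁻¹ : ZMod r)), mul_assoc, Units.inv_mul, mul_one]
  have hb' : cX x y 1 * cX x y 0 * cX x y (-1) ∈ H := by
    have e1 : cX x y 1 = y⁻¹ * x * y := by simp [cX]
    have e3 : cX x y (-1) = y * x * y⁻¹ := by simp [cX]
    rw [e1, hx0, e3]; exact hb
  obtain ⟨m1, hm1⟩ := hsur 1
  have hB' : cX x y 2 * cX x y 1 * cX x y 0 ∈ H := by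
    have e : (c ^ m1)⁻¹ * (cX x y 1 * cX x y 0 * cX x y (-1)) * c ^ m1
        = ((c ^ m1)⁻¹ * cX x y 1 * c ^ m1) * ((c ^ m1)⁻¹ * cX x y 0 * c ^ m1)
          * ((c ^ m1)⁻¹ * cX x y (-1) * c ^ m1) := by group
    have hmem := hHm m1 _ hb'
    rw [e, hcm, hcm, hcm] at hmem
    have e1 : cX x y (1 + 3 * m1) = cX x y 2 :=
      cX_congr x y hr (by push_cast at hm1 ⊢; linear_combination hm1)
    have e2 : cX x y (0 + 3 * m1) = cX x y 1 :=
      cX_congr x y hr (by push_cast at hm1 ⊢; linear_combination hm1)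
    have e3 : cX x y (-1 + 3 * m1) = cX x y 0 :=
      cX_congr x y hr (by push_cast at hm1 ⊢; linear_combination hm1)
    rwa [e1, e2, e3] at hmem
  have hD : cX x y (-1) * (cX x y 2)⁻¹ ∈ H := by
    have hmem := mul_mem hb' (inv_mem hB')
    have h3 : cX x y 0 * cX x y (-1) = cX x y (-1) * cX x y 0 := hcomm' 0 (-1)
    have h2 : cX x y 1 * cX x y (-1) = cX x y (-1) * cX x y 1 := hcomm' 1 (-1)
    have e : cX x y 1 * cX x y 0 * cX x y (-1) * (cX x y 2 * cX x y 1 * cX x y 0)⁻¹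
        = cX x y (-1) * (cX x y 2)⁻¹ := by
      calc cX x y 1 * cX x y 0 * cX x y (-1) * (cX x y 2 * cX x y 1 * cX x y 0)⁻¹
          = cX x y 1 * (cX x y 0 * cX x y (-1)) * (cX x y 0)⁻¹ * (cX x y 1)⁻¹
            * (cX x y 2)⁻¹ := by group
        _ = cX x y 1 * (cX x y (-1) * cX x y 0) * (cX x y 0)⁻¹ * (cX x y 1)⁻¹
            * (cX x y 2)⁻¹ := by rw [h3]
        _ = (cX x y 1 * cX x y (-1)) * (cX x y 1)⁻¹ * (cX x y 2)⁻¹ := by group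
        _ = (cX x y (-1) * cX x y 1) * (cX x y 1)⁻¹ * (cX x y 2)⁻¹ := by rw [h2]
        _ = cX x y (-1) * (cX x y 2)⁻¹ := by group
    rwa [e] at hmem
  have hstep : ∀ i : ℤ, cX x y i * (cX x y (i + 3))⁻¹ ∈ H := by
    intro i
    obtain ⟨m, hm⟩ := hsur ((i + 1 : ℤ) : ZMod r)
    have hmem := hHm m _ hD
    have e : (c ^ m)⁻¹ * (cX x y (-1) * (cX x y 2)⁻¹) * c ^ m
        = ((c ^ m)⁻¹ * cX x y (-1) * c ^ m) * ((c ^ m)⁻¹ * cX x y 2 * c ^ m)⁻¹ := by group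
    rw [e, hcm, hcm] at hmem
    have e1 : cX x y (-1 + 3 * m) = cX x y i :=
      cX_congr x y hr (by push_cast at hm ⊢; linear_combination hm)
    have e2 : cX x y (2 + 3 * m) = cX x y (i + 3) :=
      cX_congr x y hr (by push_cast at hm ⊢; linear_combination hm)
    rwa [e1, e2] at hmem
  have htel : ∀ nn : ℕ, cX x y 0 * (cX x y (3 * nn))⁻¹ ∈ H := by
    intro nn
    induction nn with
    | zero => simpa using H.one_mem
    | succ n ih =>
      have hmem := mul_mem ih (hstep (3 * n))
      have e : cX x y 0 * (cX x y (3 * n))⁻¹ * (cX x y (3 * n) * (cX x y (3 * n + 3))⁻¹)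
          = cX x y 0 * (cX x y (3 * ((n : ℕ) + 1 : ℕ)))⁻¹ := by
        have h' : (3 * ((n : ℕ) + 1 : ℕ) : ℤ) = 3 * (n : ℤ) + 3 := by push_cast; ring
        rw [h']; group
      rwa [e] at hmem
  have hmain : ∀ i : ℤ, cX x y 0 * (cX x y i)⁻¹ ∈ H := by
    intro i
    obtain ⟨m, hm⟩ := hsur ((i : ℤ) : ZMod r)
    have hmem := htel m
    have e : cX x y (3 * m) = cX x y i :=
      cX_congr x y hr (by push_cast at hm ⊢; linear_combination hm)
    rwa [e] at hmem
  have hx3 : x ^ 3 ∈ H := by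
    have hmem := mul_mem (mul_mem (hmain 1) hb') (hmain (-1))
    have hcbd : cX x y (-1) * cX x y 0 = cX x y 0 * cX x y (-1) := hcomm' (-1) 0
    have e : cX x y 0 * (cX x y 1)⁻¹ * (cX x y 1 * cX x y 0 * cX x y (-1))
        * (cX x y 0 * (cX x y (-1))⁻¹) = cX x y 0 ^ 3 := by
      calc cX x y 0 * (cX x y 1)⁻¹ * (cX x y 1 * cX x y 0 * cX x y (-1))
            * (cX x y 0 * (cX x y (-1))⁻¹)
          = cX x y 0 * cX x y 0 * (cX x y (-1) * cX x y 0) * (cX x y (-1))⁻¹ := by group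
        _ = cX x y 0 * cX x y 0 * (cX x y 0 * cX x y (-1)) * (cX x y (-1))⁻¹ := by rw [hcbd]
        _ = cX x y 0 * cX x y 0 * cX x y 0 := by group
        _ = cX x y 0 ^ 3 := by rw [pow_succ, pow_succ, pow_one]
    rw [e, hx0] at hmem
    exact hmem
  refine ⟨fun i => by simpa [cX] using hmain i, hx3, ?_⟩
  have hcop : IsCoprime (3 : ℤ) ((orderOf x : ℕ) : ℤ) := by
    rw [Int.isCoprime_iff_gcd_eq_one]
    exact h3q
  obtain ⟨a, b, hab⟩ := hcop
  have h1 : x ^ ((orderOf x : ℕ) : ℤ) = 1 := by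
    rw [zpow_natCast]; exact pow_orderOf_eq_one x
  have hx : x = (x ^ (3 : ℤ)) ^ a := by
    calc x = x ^ (1 : ℤ) := (zpow_one x).symm
      _ = x ^ (3 * a + ((orderOf x : ℕ) : ℤ) * b) := by
          rw [show (3 * a + ((orderOf x : ℕ) : ℤ) * b : ℤ)
              = a * 3 + b * ((orderOf x : ℕ) : ℤ) from by ring, hab]
      _ = (x ^ (3 : ℤ)) ^ a * (x ^ ((orderOf x : ℕ) : ℤ)) ^ b := by
          rw [zpow_add, zpow_mul, zpow_mul]
      _ = (x ^ (3 : ℤ)) ^ a := by rw [h1, one_zpow, mul_one]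
  rw [hx]
  have h3 : x ^ (3 : ℤ) = x ^ (3 : ℕ) := by
    rw [show ((3 : ℤ)) = ((3 : ℕ) : ℤ) from rfl, zpow_natCast]
  rw [h3]
  exact H.zpow_mem hx3 a
end
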